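/- Let f : [0,1] → ℝ be an increasing function and let φ : (0,∞) → ℝ be a positive increasing function. Set a_0 := 0, a_k := φ(k) for integers k ≥ 1, A_k := 1 − a_k/a_{k+1} and B_k := a_{k+1}/a_k − 1 for k ≥ 1. (1) If f is convex on [0,1] and the sequence (k·A_k)_{k≥1} is increasing, or if f is concave on [0,1] and the sequence (k·B_k)_{k≥1} is increasing, then the sequence n ↦ (1/n) ∑_{k=1}^{n} f(a_k/a_n) is decreasing in n. (2) If f is convex on [0,1] and (k·B_k)_{k≥1} is decreasing, or if f is concave on [0,1] and (k·A_k)_{k≥1} is decreasing, then the sequence n ↦ (1/n) ∑_{k=0}^{n-1} f(a_k/a_n) is increasing in n. -/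

import Mathlib

open Finset


private lemma sum_Icc_one' (g : ℕ → ℝ) (n : ℕ) :
    ∑ k ∈ Icc 1 n, g k = ∑ i ∈ range n, g (i+1) := by
  induction n with
  | zero => simp
  | succ m ih =>
    rw [Finset.sum_Icc_succ_top (Nat.le_add_left 1 m), ih, sum_range_succ]

private lemma sumid1' (G : ℕ → ℝ) (n : ℕ) :
    ∑ i ∈ range (n+1), (((n:ℝ) - i) * G (i+1) + (i:ℝ) * G i)
      = ((n:ℝ)+1) * ∑ i ∈ range n, G (i+1) := by
  rw [Finset.sum_add_distrib, Finset.sum_range_succ, Finset.sum_range_succ']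
  push_cast
  rw [show ((n:ℝ) - n) * G (n+1) = 0 by ring, add_zero,
    show (0:ℝ) * G 0 = 0 by ring, add_zero, ← Finset.sum_add_distrib, Finset.mul_sum]
  exact Finset.sum_congr rfl (fun i _ => by ring)

private lemma case1_convex (f : ℝ → ℝ) (a : ℕ → ℝ) (n : ℕ) (hn : 1 ≤ n)
    (hf : MonotoneOn f (Set.Icc (0:ℝ) 1))
    (hconv : ConvexOn ℝ (Set.Icc (0:ℝ) 1) f)
    (hpos : ∀ k : ℕ, 1 ≤ k → 0 < a k)
    (hmono : ∀ k l : ℕ, 1 ≤ k → k ≤ l → a k ≤ a l)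
    (hcond : ∀ k : ℕ, 1 ≤ k → k ≤ n →
      (k:ℝ) * (1 - a k / a (k+1)) ≤ (n:ℝ) * (1 - a n / a (n+1))) :
    (1 / ((n : ℝ) + 1)) * ∑ k ∈ Finset.Icc 1 (n + 1), f (a k / a (n + 1)) ≤
      (1 / (n : ℝ)) * ∑ k ∈ Finset.Icc 1 n, f (a k / a n) := by
  have npos : (0:ℝ) < n := by exact_mod_cast hn
  have han : 0 < a n := hpos n hn
  have han1 : 0 < a (n+1) := hpos (n+1) (Nat.le_add_left 1 n)
  have hann : a n ≤ a (n+1) := hmono n (n+1) hn (Nat.le_succ n)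
  have humem : ∀ k : ℕ, k ≤ n → 1 ≤ k → a k / a n ∈ Set.Icc (0:ℝ) 1 := by
    intro k hk hk1
    exact ⟨le_of_lt (div_pos (hpos k hk1) han), (div_le_one han).2 (hmono k n hk1 hk)⟩
  have hvmem : ∀ k : ℕ, k ≤ n+1 → 1 ≤ k → a k / a (n+1) ∈ Set.Icc (0:ℝ) 1 := by
    intro k hk hk1
    exact ⟨le_of_lt (div_pos (hpos k hk1) han1), (div_le_one han1).2 (hmono k (n+1) hk1 hk)⟩
  have key : ∀ i ∈ range (n+1),
      (n:ℝ) * f (a (i+1) / a (n+1))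
        ≤ ((n:ℝ) - i) * f (a (i+1) / a n) + (i:ℝ) * f (a i / a n) := by
    intro i hi
    rw [mem_range, Nat.lt_succ_iff] at hi
    rcases eq_or_lt_of_le hi with hin | hin
    · subst hin
      rw [div_self (ne_of_gt han1), div_self (ne_of_gt han), sub_self, zero_mul, zero_add]
    · have hi1n : i + 1 ≤ n := hin
      rcases Nat.eq_zero_or_pos i with hi0 | hi0
      · subst hi0
        push_cast
        rw [sub_zero, zero_mul, add_zero]
        have h1 : a 1 / a (n+1) ≤ a 1 / a n :=
          div_le_div_of_nonneg_left (le_of_lt (hpos 1 le_rfl)) han hann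
        have h2 := hf (hvmem 1 (by omega) le_rfl) (humem 1 (by omega) le_rfl) h1
        nlinarith [h2]
      · have hpi : 0 < a i := hpos i hi0
        have hpi1 : 0 < a (i+1) := hpos (i+1) (by omega)
        have hain : a i ≤ a n := hmono i n hi0 (by omega)
        have hxmem : a i / a n ∈ Set.Icc (0:ℝ) 1 := humem i (by omega) hi0
        have hymem : a (i+1) / a n ∈ Set.Icc (0:ℝ) 1 := humem (i+1) hi1n (by omega)
        have hvm : a (i+1) / a (n+1) ∈ Set.Icc (0:ℝ) 1 := hvmem (i+1) (by omega) (by omega)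
        have hb0 : (0:ℝ) ≤ (i:ℝ)/n := by positivity
        have hic : (i:ℝ) ≤ n := by exact_mod_cast (by omega : i ≤ n)
        have ha0' : (0:ℝ) ≤ ((n:ℝ)-i)/n := div_nonneg (by linarith) npos.le
        have habsum : ((n:ℝ)-i)/n + (i:ℝ)/n = 1 := by field_simp; ring
        have hc' : (i:ℝ) * (a (i+1) - a i) * a (n+1) ≤ (n:ℝ) * (a (n+1) - a n) * a (i+1) := by
          have hc := hcond i hi0 (by omega)
          have e1 : (1 - a i / a (i+1)) = (a (i+1) - a i) / a (i+1) := by field_simp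
          have e2 : (1 - a n / a (n+1)) = (a (n+1) - a n) / a (n+1) := by field_simp
          rw [e1, e2, mul_div_assoc', mul_div_assoc', div_le_div_iff₀ hpi1 han1] at hc
          nlinarith [hc]
        have hcomb : a (i+1) / a (n+1)
            ≤ ((n:ℝ)-i)/n * (a (i+1) / a n) + (i:ℝ)/n * (a i / a n) := by
          have rhseq : ((n:ℝ)-i)/n * (a (i+1) / a n) + (i:ℝ)/n * (a i / a n)
              = (((n:ℝ)-i) * a (i+1) + i * a i) / (n * a n) := by
            field_simp
            try ring
          rw [rhseq, div_le_div_iff₀ han1 (by positivity)]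
          nlinarith [hc']
        have hzmem : ((n:ℝ)-i)/n * (a (i+1) / a n) + (i:ℝ)/n * (a i / a n) ∈ Set.Icc (0:ℝ) 1 := by
          have := (convex_Icc (0:ℝ) 1) hymem hxmem ha0' hb0 habsum
          simpa [smul_eq_mul] using this
        have h1 : f (a (i+1) / a (n+1))
            ≤ f (((n:ℝ)-i)/n * (a (i+1) / a n) + (i:ℝ)/n * (a i / a n)) := hf hvm hzmem hcomb
        have h2 : f (((n:ℝ)-i)/n * (a (i+1) / a n) + (i:ℝ)/n * (a i / a n))
            ≤ ((n:ℝ)-i)/n * f (a (i+1) / a n) + (i:ℝ)/n * f (a i / a n) := by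
          have := hconv.2 hymem hxmem ha0' hb0 habsum
          simpa [smul_eq_mul] using this
        have h3 := h1.trans h2
        have h4 := mul_le_mul_of_nonneg_left h3 npos.le
        have heq : (n:ℝ) * (((n:ℝ)-i)/n * f (a (i+1) / a n) + (i:ℝ)/n * f (a i / a n))
            = ((n:ℝ)-i) * f (a (i+1) / a n) + (i:ℝ) * f (a i / a n) := by
          field_simp
          try ring
        linarith [h4, heq.le, heq.ge]
  have hs2 : (n:ℝ) * ∑ i ∈ range (n+1), f (a (i+1) / a (n+1))
      ≤ ((n:ℝ)+1) * ∑ i ∈ range n, f (a (i+1) / a n) := by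
    rw [Finset.mul_sum]
    exact le_of_le_of_eq (Finset.sum_le_sum key) (sumid1' (fun k => f (a k / a n)) n)
  have e1 : ∑ k ∈ Finset.Icc 1 (n+1), f (a k / a (n+1))
      = ∑ i ∈ range (n+1), f (a (i+1) / a (n+1)) := sum_Icc_one' _ _
  have e2 : ∑ k ∈ Finset.Icc 1 n, f (a k / a n)
      = ∑ i ∈ range n, f (a (i+1) / a n) := sum_Icc_one' _ _
  rw [e1, e2, div_mul_eq_mul_div, div_mul_eq_mul_div,
    div_le_div_iff₀ (by positivity) npos]
  nlinarith [hs2]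


private lemma sumid2' (H : ℕ → ℝ) (n : ℕ) :
    ∑ i ∈ range n, (((n:ℝ) - i) * H (i+1) + ((i:ℝ)+1) * H (i+2))
      = (n:ℝ) * ∑ i ∈ range (n+1), H (i+1) := by
  rw [Finset.sum_add_distrib]
  have h2 : ∑ i ∈ range n, ((i:ℝ)+1) * H (i+2)
      = ∑ i ∈ range (n+1), (i:ℝ) * H (i+1) := by
    rw [Finset.sum_range_succ']
    push_cast
    simp
  have h1 : ∑ i ∈ range n, ((n:ℝ) - i) * H (i+1)
      = ∑ i ∈ range (n+1), ((n:ℝ) - i) * H (i+1) := by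
    rw [Finset.sum_range_succ, show ((n:ℝ) - n) * H (n+1) = 0 by ring, add_zero]
  rw [h1, h2, Finset.mul_sum, ← Finset.sum_add_distrib]
  exact Finset.sum_congr rfl (fun i _ => by ring)

private lemma case1_concave (f : ℝ → ℝ) (a : ℕ → ℝ) (n : ℕ) (hn : 1 ≤ n)
    (hf : MonotoneOn f (Set.Icc (0:ℝ) 1))
    (hconc : ConcaveOn ℝ (Set.Icc (0:ℝ) 1) f)
    (hpos : ∀ k : ℕ, 1 ≤ k → 0 < a k)
    (hmono : ∀ k l : ℕ, 1 ≤ k → k ≤ l → a k ≤ a l)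
    (hcond : ∀ k : ℕ, 1 ≤ k → k ≤ n →
      (k:ℝ) * (a (k+1) / a k - 1) ≤ (n:ℝ) * (a (n+1) / a n - 1)) :
    (1 / ((n : ℝ) + 1)) * ∑ k ∈ Finset.Icc 1 (n + 1), f (a k / a (n + 1)) ≤
      (1 / (n : ℝ)) * ∑ k ∈ Finset.Icc 1 n, f (a k / a n) := by
  have npos : (0:ℝ) < n := by exact_mod_cast hn
  have han : 0 < a n := hpos n hn
  have han1 : 0 < a (n+1) := hpos (n+1) (Nat.le_add_left 1 n)
  have hann : a n ≤ a (n+1) := hmono n (n+1) hn (Nat.le_succ n)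
  have humem : ∀ k : ℕ, k ≤ n → 1 ≤ k → a k / a n ∈ Set.Icc (0:ℝ) 1 := by
    intro k hk hk1
    exact ⟨le_of_lt (div_pos (hpos k hk1) han), (div_le_one han).2 (hmono k n hk1 hk)⟩
  have hvmem : ∀ k : ℕ, k ≤ n+1 → 1 ≤ k → a k / a (n+1) ∈ Set.Icc (0:ℝ) 1 := by
    intro k hk hk1
    exact ⟨le_of_lt (div_pos (hpos k hk1) han1), (div_le_one han1).2 (hmono k (n+1) hk1 hk)⟩
  have key : ∀ i ∈ range n,
      ((n:ℝ) - i) * f (a (i+1) / a (n+1)) + ((i:ℝ)+1) * f (a (i+2) / a (n+1))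
        ≤ ((n:ℝ)+1) * f (a (i+1) / a n) := by
    intro i hi
    rw [mem_range] at hi
    have hi1 : 1 ≤ i + 1 := Nat.le_add_left 1 i
    have hpi1 : 0 < a (i+1) := hpos (i+1) hi1
    have hpi2 : 0 < a (i+2) := hpos (i+2) (by omega)
    have hvm1 : a (i+1) / a (n+1) ∈ Set.Icc (0:ℝ) 1 := hvmem (i+1) (by omega) hi1
    have hvm2 : a (i+2) / a (n+1) ∈ Set.Icc (0:ℝ) 1 := hvmem (i+2) (by omega) (by omega)
    have hum : a (i+1) / a n ∈ Set.Icc (0:ℝ) 1 := humem (i+1) (by omega) hi1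
    have hic : (i:ℝ) ≤ n := by exact_mod_cast (by omega : i ≤ n)
    have hb0 : (0:ℝ) ≤ ((i:ℝ)+1)/((n:ℝ)+1) := by positivity
    have ha0' : (0:ℝ) ≤ ((n:ℝ)-i)/((n:ℝ)+1) := div_nonneg (by linarith) (by linarith)
    have habsum : ((n:ℝ)-i)/((n:ℝ)+1) + ((i:ℝ)+1)/((n:ℝ)+1) = 1 := by
      field_simp
      try ring
    have hc' : ((i:ℝ)+1) * (a (i+2) - a (i+1)) * a n ≤ (n:ℝ) * (a (n+1) - a n) * a (i+1) := by
      have hc := hcond (i+1) hi1 (by omega)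
      have e1 : (a (i+2) / a (i+1) - 1) = (a (i+2) - a (i+1)) / a (i+1) := by field_simp
      have e2 : (a (n+1) / a n - 1) = (a (n+1) - a n) / a n := by field_simp
      rw [e1, e2, mul_div_assoc', mul_div_assoc', div_le_div_iff₀ hpi1 han] at hc
      push_cast at hc
      nlinarith [hc]
    have hcomb : ((n:ℝ)-i)/((n:ℝ)+1) * (a (i+1) / a (n+1)) + ((i:ℝ)+1)/((n:ℝ)+1) * (a (i+2) / a (n+1))
        ≤ a (i+1) / a n := by
      have lhseq : ((n:ℝ)-i)/((n:ℝ)+1) * (a (i+1) / a (n+1)) + ((i:ℝ)+1)/((n:ℝ)+1) * (a (i+2) / a (n+1))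
          = (((n:ℝ)-i) * a (i+1) + ((i:ℝ)+1) * a (i+2)) / (((n:ℝ)+1) * a (n+1)) := by
        field_simp
        try ring
      rw [lhseq, div_le_div_iff₀ (by positivity) han]
      nlinarith [hc', mul_nonneg hpi1.le (sub_nonneg.2 hann)]
    have hzmem : ((n:ℝ)-i)/((n:ℝ)+1) * (a (i+1) / a (n+1)) + ((i:ℝ)+1)/((n:ℝ)+1) * (a (i+2) / a (n+1))
        ∈ Set.Icc (0:ℝ) 1 := by
      have := (convex_Icc (0:ℝ) 1) hvm1 hvm2 ha0' hb0 habsum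
      simpa [smul_eq_mul] using this
    have h2 : ((n:ℝ)-i)/((n:ℝ)+1) * f (a (i+1) / a (n+1)) + ((i:ℝ)+1)/((n:ℝ)+1) * f (a (i+2) / a (n+1))
        ≤ f (((n:ℝ)-i)/((n:ℝ)+1) * (a (i+1) / a (n+1)) + ((i:ℝ)+1)/((n:ℝ)+1) * (a (i+2) / a (n+1))) := by
      have := hconc.2 hvm1 hvm2 ha0' hb0 habsum
      simpa [smul_eq_mul] using this
    have h1 : f (((n:ℝ)-i)/((n:ℝ)+1) * (a (i+1) / a (n+1)) + ((i:ℝ)+1)/((n:ℝ)+1) * (a (i+2) / a (n+1)))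
        ≤ f (a (i+1) / a n) := hf hzmem hum hcomb
    have h3 := h2.trans h1
    have h4 := mul_le_mul_of_nonneg_left h3 (by linarith : (0:ℝ) ≤ (n:ℝ)+1)
    have heq : ((n:ℝ)+1) * (((n:ℝ)-i)/((n:ℝ)+1) * f (a (i+1) / a (n+1)) + ((i:ℝ)+1)/((n:ℝ)+1) * f (a (i+2) / a (n+1)))
        = ((n:ℝ)-i) * f (a (i+1) / a (n+1)) + ((i:ℝ)+1) * f (a (i+2) / a (n+1)) := by
      field_simp
      try ring
    linarith [h4, heq.le, heq.ge]
  have hs2 : (n:ℝ) * ∑ i ∈ range (n+1), f (a (i+1) / a (n+1))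
      ≤ ((n:ℝ)+1) * ∑ i ∈ range n, f (a (i+1) / a n) := by
    calc (n:ℝ) * ∑ i ∈ range (n+1), f (a (i+1) / a (n+1))
        = ∑ i ∈ range n, (((n:ℝ) - i) * f (a (i+1) / a (n+1)) + ((i:ℝ)+1) * f (a (i+2) / a (n+1))) :=
          (sumid2' (fun k => f (a k / a (n+1))) n).symm
      _ ≤ ∑ i ∈ range n, (((n:ℝ)+1) * f (a (i+1) / a n)) := Finset.sum_le_sum key
      _ = ((n:ℝ)+1) * ∑ i ∈ range n, f (a (i+1) / a n) := (Finset.mul_sum _ _ _).symm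
  have e1 : ∑ k ∈ Finset.Icc 1 (n+1), f (a k / a (n+1))
      = ∑ i ∈ range (n+1), f (a (i+1) / a (n+1)) := sum_Icc_one' _ _
  have e2 : ∑ k ∈ Finset.Icc 1 n, f (a k / a n)
      = ∑ i ∈ range n, f (a (i+1) / a n) := sum_Icc_one' _ _
  rw [e1, e2, div_mul_eq_mul_div, div_mul_eq_mul_div,
    div_le_div_iff₀ (by positivity) npos]
  nlinarith [hs2]


private lemma sumid3' (H : ℕ → ℝ) (n : ℕ) :
    ∑ k ∈ range n, (((n:ℝ) - k) * H k + ((k:ℝ)+1) * H (k+1))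
      = (n:ℝ) * ∑ k ∈ range (n+1), H k := by
  rw [Finset.sum_add_distrib]
  have h2 : ∑ k ∈ range n, ((k:ℝ)+1) * H (k+1)
      = ∑ k ∈ range (n+1), (k:ℝ) * H k := by
    rw [Finset.sum_range_succ']
    push_cast
    simp
  have h1 : ∑ k ∈ range n, ((n:ℝ) - k) * H k
      = ∑ k ∈ range (n+1), ((n:ℝ) - k) * H k := by
    rw [Finset.sum_range_succ, show ((n:ℝ) - n) * H n = 0 by ring, add_zero]
  rw [h1, h2, Finset.mul_sum, ← Finset.sum_add_distrib]
  exact Finset.sum_congr rfl (fun i _ => by ring)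

private lemma sumid4' (G : ℕ → ℝ) (n : ℕ) :
    ∑ j ∈ range (n+1), (((n:ℝ) - j) * G j + (j:ℝ) * G (j-1))
      = ((n:ℝ)+1) * ∑ j ∈ range n, G j := by
  rw [Finset.sum_add_distrib]
  have h2 : ∑ j ∈ range (n+1), (j:ℝ) * G (j-1)
      = ∑ j ∈ range n, ((j:ℝ)+1) * G j := by
    rw [Finset.sum_range_succ']
    push_cast
    simp
  have h1 : ∑ j ∈ range (n+1), ((n:ℝ) - j) * G j
      = ∑ j ∈ range n, ((n:ℝ) - j) * G j := by
    rw [Finset.sum_range_succ, show ((n:ℝ) - n) * G n = 0 by ring, add_zero]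
  rw [h1, h2, Finset.mul_sum, ← Finset.sum_add_distrib]
  exact Finset.sum_congr rfl (fun i _ => by ring)

private lemma case2_convex (f : ℝ → ℝ) (a : ℕ → ℝ) (n : ℕ) (hn : 1 ≤ n)
    (hf : MonotoneOn f (Set.Icc (0:ℝ) 1))
    (hconv : ConvexOn ℝ (Set.Icc (0:ℝ) 1) f)
    (ha0 : a 0 = 0)
    (hpos : ∀ k : ℕ, 1 ≤ k → 0 < a k)
    (hmono : ∀ k l : ℕ, 1 ≤ k → k ≤ l → a k ≤ a l)
    (hcond : ∀ k : ℕ, 1 ≤ k → k ≤ n →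
      (n:ℝ) * (a (n+1) / a n - 1) ≤ (k:ℝ) * (a (k+1) / a k - 1)) :
    (1 / (n : ℝ)) * ∑ k ∈ Finset.range n, f (a k / a n) ≤
      (1 / ((n : ℝ) + 1)) * ∑ k ∈ Finset.range (n + 1), f (a k / a (n + 1)) := by
  have npos : (0:ℝ) < n := by exact_mod_cast hn
  have han : 0 < a n := hpos n hn
  have han1 : 0 < a (n+1) := hpos (n+1) (Nat.le_add_left 1 n)
  have hann : a n ≤ a (n+1) := hmono n (n+1) hn (Nat.le_succ n)
  have humem : ∀ k : ℕ, k ≤ n → a k / a n ∈ Set.Icc (0:ℝ) 1 := by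
    intro k hk
    rcases Nat.eq_zero_or_pos k with rfl | hk1
    · rw [ha0, zero_div]; exact ⟨le_rfl, zero_le_one⟩
    · exact ⟨le_of_lt (div_pos (hpos k hk1) han), (div_le_one han).2 (hmono k n hk1 hk)⟩
  have hvmem : ∀ k : ℕ, k ≤ n+1 → a k / a (n+1) ∈ Set.Icc (0:ℝ) 1 := by
    intro k hk
    rcases Nat.eq_zero_or_pos k with rfl | hk1
    · rw [ha0, zero_div]; exact ⟨le_rfl, zero_le_one⟩
    · exact ⟨le_of_lt (div_pos (hpos k hk1) han1), (div_le_one han1).2 (hmono k (n+1) hk1 hk)⟩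
  have key : ∀ k ∈ range n,
      ((n:ℝ)+1) * f (a k / a n)
        ≤ ((n:ℝ) - k) * f (a k / a (n+1)) + ((k:ℝ)+1) * f (a (k+1) / a (n+1)) := by
    intro k hk
    rw [mem_range] at hk
    rcases Nat.eq_zero_or_pos k with rfl | hk1
    · rw [ha0, zero_div]
      push_cast
      rw [sub_zero, zero_add, one_mul]
      have h1 : f 0 ≤ f (a 1 / a (n+1)) := by
        apply hf ⟨le_rfl, zero_le_one⟩ (hvmem 1 (by omega))
        exact div_nonneg (hpos 1 le_rfl).le han1.le
      have h0 : (0:ℝ)/a (n+1) = 0 := by rw [zero_div]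
      rw [h0]
      linarith [h1]
    · have hpk : 0 < a k := hpos k hk1
      have hpk1 : 0 < a (k+1) := hpos (k+1) (by omega)
      have hkn : (k:ℝ) ≤ n := by exact_mod_cast (by omega : k ≤ n)
      have hum : a k / a n ∈ Set.Icc (0:ℝ) 1 := humem k (by omega)
      have hvm1 : a k / a (n+1) ∈ Set.Icc (0:ℝ) 1 := hvmem k (by omega)
      have hvm2 : a (k+1) / a (n+1) ∈ Set.Icc (0:ℝ) 1 := hvmem (k+1) (by omega)
      have hb0 : (0:ℝ) ≤ ((k:ℝ)+1)/((n:ℝ)+1) := by positivity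
      have ha0' : (0:ℝ) ≤ ((n:ℝ)-k)/((n:ℝ)+1) := div_nonneg (by linarith) (by linarith)
      have habsum : ((n:ℝ)-k)/((n:ℝ)+1) + ((k:ℝ)+1)/((n:ℝ)+1) = 1 := by
        field_simp
        try ring
      have h1 : (n:ℝ) * (a (n+1) - a n) * a k ≤ (k:ℝ) * (a (k+1) - a k) * a n := by
        have hc := hcond k hk1 (by omega)
        have e1 : (a (k+1) / a k - 1) = (a (k+1) - a k) / a k := by field_simp
        have e2 : (a (n+1) / a n - 1) = (a (n+1) - a n) / a n := by field_simp
        rw [e1, e2, mul_div_assoc', mul_div_assoc', div_le_div_iff₀ han hpk] at hc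
        nlinarith [hc]
      have hX : (0:ℝ) ≤ a k * (a (n+1) - a n) := mul_nonneg hpk.le (by linarith)
      have h2 : a k * a (n+1) ≤ a n * a (k+1) := by
        have hprod : (0:ℝ) ≤ ((n:ℝ) - k) * (a k * (a (n+1) - a n)) :=
          mul_nonneg (by linarith) hX
        have hkpos : (0:ℝ) < k := by exact_mod_cast hk1
        nlinarith [h1, hprod, hkpos]
      have hcomb : a k / a n
          ≤ ((n:ℝ)-k)/((n:ℝ)+1) * (a k / a (n+1)) + ((k:ℝ)+1)/((n:ℝ)+1) * (a (k+1) / a (n+1)) := by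
        have rhseq : ((n:ℝ)-k)/((n:ℝ)+1) * (a k / a (n+1)) + ((k:ℝ)+1)/((n:ℝ)+1) * (a (k+1) / a (n+1))
            = (((n:ℝ)-k) * a k + ((k:ℝ)+1) * a (k+1)) / (((n:ℝ)+1) * a (n+1)) := by
          field_simp
          try ring
        rw [rhseq, div_le_div_iff₀ han (by positivity)]
        nlinarith [h1, h2]
      have hzmem : ((n:ℝ)-k)/((n:ℝ)+1) * (a k / a (n+1)) + ((k:ℝ)+1)/((n:ℝ)+1) * (a (k+1) / a (n+1))
          ∈ Set.Icc (0:ℝ) 1 := by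
        have := (convex_Icc (0:ℝ) 1) hvm1 hvm2 ha0' hb0 habsum
        simpa [smul_eq_mul] using this
      have hm1 : f (a k / a n)
          ≤ f (((n:ℝ)-k)/((n:ℝ)+1) * (a k / a (n+1)) + ((k:ℝ)+1)/((n:ℝ)+1) * (a (k+1) / a (n+1))) :=
        hf hum hzmem hcomb
      have hm2 : f (((n:ℝ)-k)/((n:ℝ)+1) * (a k / a (n+1)) + ((k:ℝ)+1)/((n:ℝ)+1) * (a (k+1) / a (n+1)))
          ≤ ((n:ℝ)-k)/((n:ℝ)+1) * f (a k / a (n+1)) + ((k:ℝ)+1)/((n:ℝ)+1) * f (a (k+1) / a (n+1)) := by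
        have := hconv.2 hvm1 hvm2 ha0' hb0 habsum
        simpa [smul_eq_mul] using this
      have h3 := hm1.trans hm2
      have h4 := mul_le_mul_of_nonneg_left h3 (by linarith : (0:ℝ) ≤ (n:ℝ)+1)
      have heq : ((n:ℝ)+1) * (((n:ℝ)-k)/((n:ℝ)+1) * f (a k / a (n+1)) + ((k:ℝ)+1)/((n:ℝ)+1) * f (a (k+1) / a (n+1)))
          = ((n:ℝ)-k) * f (a k / a (n+1)) + ((k:ℝ)+1) * f (a (k+1) / a (n+1)) := by
        field_simp
        try ring
      linarith [h4, heq.le, heq.ge]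
  have hs2 : ((n:ℝ)+1) * ∑ k ∈ range n, f (a k / a n)
      ≤ (n:ℝ) * ∑ k ∈ range (n+1), f (a k / a (n+1)) := by
    calc ((n:ℝ)+1) * ∑ k ∈ range n, f (a k / a n)
        = ∑ k ∈ range n, (((n:ℝ)+1) * f (a k / a n)) := Finset.mul_sum _ _ _
      _ ≤ ∑ k ∈ range n, (((n:ℝ) - k) * f (a k / a (n+1)) + ((k:ℝ)+1) * f (a (k+1) / a (n+1))) :=
          Finset.sum_le_sum key
      _ = (n:ℝ) * ∑ k ∈ range (n+1), f (a k / a (n+1)) := sumid3' (fun k => f (a k / a (n+1))) n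
  rw [div_mul_eq_mul_div, div_mul_eq_mul_div, div_le_div_iff₀ npos (by positivity)]
  nlinarith [hs2]

private lemma case2_concave (f : ℝ → ℝ) (a : ℕ → ℝ) (n : ℕ) (hn : 1 ≤ n)
    (hf : MonotoneOn f (Set.Icc (0:ℝ) 1))
    (hconc : ConcaveOn ℝ (Set.Icc (0:ℝ) 1) f)
    (ha0 : a 0 = 0)
    (hpos : ∀ k : ℕ, 1 ≤ k → 0 < a k)
    (hmono : ∀ k l : ℕ, 1 ≤ k → k ≤ l → a k ≤ a l)
    (hcond : ∀ k : ℕ, 1 ≤ k → k ≤ n →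
      (n:ℝ) * (1 - a n / a (n+1)) ≤ (k:ℝ) * (1 - a k / a (k+1))) :
    (1 / (n : ℝ)) * ∑ k ∈ Finset.range n, f (a k / a n) ≤
      (1 / ((n : ℝ) + 1)) * ∑ k ∈ Finset.range (n + 1), f (a k / a (n + 1)) := by
  have npos : (0:ℝ) < n := by exact_mod_cast hn
  have han : 0 < a n := hpos n hn
  have han1 : 0 < a (n+1) := hpos (n+1) (Nat.le_add_left 1 n)
  have hann : a n ≤ a (n+1) := hmono n (n+1) hn (Nat.le_succ n)
  have humem : ∀ k : ℕ, k ≤ n → a k / a n ∈ Set.Icc (0:ℝ) 1 := by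
    intro k hk
    rcases Nat.eq_zero_or_pos k with rfl | hk1
    · rw [ha0, zero_div]; exact ⟨le_rfl, zero_le_one⟩
    · exact ⟨le_of_lt (div_pos (hpos k hk1) han), (div_le_one han).2 (hmono k n hk1 hk)⟩
  have hvmem : ∀ k : ℕ, k ≤ n+1 → a k / a (n+1) ∈ Set.Icc (0:ℝ) 1 := by
    intro k hk
    rcases Nat.eq_zero_or_pos k with rfl | hk1
    · rw [ha0, zero_div]; exact ⟨le_rfl, zero_le_one⟩
    · exact ⟨le_of_lt (div_pos (hpos k hk1) han1), (div_le_one han1).2 (hmono k (n+1) hk1 hk)⟩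
  have key : ∀ j ∈ range (n+1),
      ((n:ℝ) - j) * f (a j / a n) + (j:ℝ) * f (a (j-1) / a n)
        ≤ (n:ℝ) * f (a j / a (n+1)) := by
    intro j hj
    rw [mem_range, Nat.lt_succ_iff] at hj
    rcases j with _ | m
    · -- j = 0
      simp [ha0]
    · -- j = m+1
      have hj1 : 1 ≤ m + 1 := Nat.le_add_left 1 m
      have hmn : m + 1 ≤ n := hj
      have hpj : 0 < a (m+1) := hpos (m+1) hj1
      have hjn : ((m:ℝ)+1) ≤ n := by exact_mod_cast hmn
      have hum1 : a (m+1) / a n ∈ Set.Icc (0:ℝ) 1 := humem (m+1) hmn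
      have hum2 : a m / a n ∈ Set.Icc (0:ℝ) 1 := humem m (by omega)
      have hvm : a (m+1) / a (n+1) ∈ Set.Icc (0:ℝ) 1 := hvmem (m+1) (by omega)
      have hsimp : ((m+1:ℕ):ℝ) = (m:ℝ)+1 := by push_cast; ring
      -- scalar inequality
      have hscal : (((n:ℝ) - ((m:ℝ)+1)) * a (m+1) + ((m:ℝ)+1) * a m) * a (n+1)
          ≤ (n:ℝ) * a (m+1) * a n := by
        rcases Nat.eq_zero_or_pos m with rfl | hm1
        · -- j = 1
          rw [ha0]
          have hc := hcond 1 le_rfl (by omega)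
          have h12 : 0 < a 1 := hpos 1 le_rfl
          have h22 : 0 < a 2 := hpos 2 (by omega)
          have ha12 : 0 ≤ a 1 / a 2 := by positivity
          have hle1 : (n:ℝ) * (1 - a n / a (n+1)) ≤ 1 := by
            push_cast at hc
            nlinarith [hc, ha12]
          have hcross : (n:ℝ) * (a (n+1) - a n) ≤ a (n+1) := by
            have e2 : (1 - a n / a (n+1)) = (a (n+1) - a n) / a (n+1) := by field_simp
            rw [e2, mul_div_assoc'] at hle1
            rw [div_le_one han1] at hle1
            linarith
          push_cast
          nlinarith [hcross, hpos 1 le_rfl]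
        · -- j = m+1 ≥ 2
          have hpm : 0 < a m := hpos m hm1
          have hc := hcond m hm1 (by omega)
          have hc2 : (n:ℝ) * a (m+1) * (a (n+1) - a n) ≤ (m:ℝ) * (a (m+1) - a m) * a (n+1) := by
            have e1 : (1 - a m / a (m+1)) = (a (m+1) - a m) / a (m+1) := by field_simp
            have e2 : (1 - a n / a (n+1)) = (a (n+1) - a n) / a (n+1) := by field_simp
            rw [e1, e2, mul_div_assoc', mul_div_assoc', div_le_div_iff₀ han1 hpj] at hc
            nlinarith [hc]
          have hmm : a m ≤ a (m+1) := hmono m (m+1) hm1 (Nat.le_succ m)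
          nlinarith [hc2, mul_nonneg han1.le (sub_nonneg.2 hmm)]
      have hb0 : (0:ℝ) ≤ ((m:ℝ)+1)/(n:ℝ) := by positivity
      have ha0' : (0:ℝ) ≤ ((n:ℝ)-((m:ℝ)+1))/(n:ℝ) := div_nonneg (by linarith) npos.le
      have habsum : ((n:ℝ)-((m:ℝ)+1))/(n:ℝ) + ((m:ℝ)+1)/(n:ℝ) = 1 := by
        field_simp
        try ring
      have hcomb : ((n:ℝ)-((m:ℝ)+1))/(n:ℝ) * (a (m+1) / a n) + ((m:ℝ)+1)/(n:ℝ) * (a m / a n)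
          ≤ a (m+1) / a (n+1) := by
        have lhseq : ((n:ℝ)-((m:ℝ)+1))/(n:ℝ) * (a (m+1) / a n) + ((m:ℝ)+1)/(n:ℝ) * (a m / a n)
            = (((n:ℝ)-((m:ℝ)+1)) * a (m+1) + ((m:ℝ)+1) * a m) / ((n:ℝ) * a n) := by
          field_simp
          try ring
        rw [lhseq, div_le_div_iff₀ (by positivity) han1]
        nlinarith [hscal]
      have hzmem : ((n:ℝ)-((m:ℝ)+1))/(n:ℝ) * (a (m+1) / a n) + ((m:ℝ)+1)/(n:ℝ) * (a m / a n)
          ∈ Set.Icc (0:ℝ) 1 := by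
        have := (convex_Icc (0:ℝ) 1) hum1 hum2 ha0' hb0 habsum
        simpa [smul_eq_mul] using this
      have hm2 : ((n:ℝ)-((m:ℝ)+1))/(n:ℝ) * f (a (m+1) / a n) + ((m:ℝ)+1)/(n:ℝ) * f (a m / a n)
          ≤ f (((n:ℝ)-((m:ℝ)+1))/(n:ℝ) * (a (m+1) / a n) + ((m:ℝ)+1)/(n:ℝ) * (a m / a n)) := by
        have := hconc.2 hum1 hum2 ha0' hb0 habsum
        simpa [smul_eq_mul] using this
      have hm1 : f (((n:ℝ)-((m:ℝ)+1))/(n:ℝ) * (a (m+1) / a n) + ((m:ℝ)+1)/(n:ℝ) * (a m / a n))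
          ≤ f (a (m+1) / a (n+1)) := hf hzmem hvm hcomb
      have h3 := hm2.trans hm1
      have h4 := mul_le_mul_of_nonneg_left h3 npos.le
      have heq : (n:ℝ) * (((n:ℝ)-((m:ℝ)+1))/(n:ℝ) * f (a (m+1) / a n) + ((m:ℝ)+1)/(n:ℝ) * f (a m / a n))
          = ((n:ℝ)-((m:ℝ)+1)) * f (a (m+1) / a n) + ((m:ℝ)+1) * f (a m / a n) := by
        field_simp
        try ring
      have hfin : ((n:ℝ)-((m:ℝ)+1)) * f (a (m+1) / a n) + ((m:ℝ)+1) * f (a m / a n)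
          ≤ (n:ℝ) * f (a (m+1) / a (n+1)) := by linarith [h4, heq.le, heq.ge]
      have hcast : ((m+1:ℕ):ℝ) = (m:ℝ)+1 := by push_cast; ring
      simp only [hcast, Nat.add_sub_cancel]
      exact hfin
  have hs2 : ((n:ℝ)+1) * ∑ k ∈ range n, f (a k / a n)
      ≤ (n:ℝ) * ∑ k ∈ range (n+1), f (a k / a (n+1)) := by
    calc ((n:ℝ)+1) * ∑ k ∈ range n, f (a k / a n)
        = ∑ j ∈ range (n+1), (((n:ℝ) - j) * f (a j / a n) + (j:ℝ) * f (a (j-1) / a n)) :=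
          (sumid4' (fun k => f (a k / a n)) n).symm
      _ ≤ ∑ j ∈ range (n+1), ((n:ℝ) * f (a j / a (n+1))) := Finset.sum_le_sum key
      _ = (n:ℝ) * ∑ k ∈ range (n+1), f (a k / a (n+1)) := (Finset.mul_sum _ _ _).symm
  rw [div_mul_eq_mul_div, div_mul_eq_mul_div, div_le_div_iff₀ npos (by positivity)]
  nlinarith [hs2]


private lemma chain_mono' (C : ℕ → ℝ) (h : ∀ k : ℕ, 1 ≤ k → C k ≤ C (k+1)) :
    ∀ k l : ℕ, 1 ≤ k → k ≤ l → C k ≤ C l := by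
  intro k l hk hkl
  induction l, hkl using Nat.le_induction with
  | base => exact le_rfl
  | succ m hm ih => exact ih.trans (h m (hk.trans hm))

private lemma chain_anti' (C : ℕ → ℝ) (h : ∀ k : ℕ, 1 ≤ k → C (k+1) ≤ C k) :
    ∀ k l : ℕ, 1 ≤ k → k ≤ l → C l ≤ C k := by
  intro k l hk hkl
  induction l, hkl using Nat.le_induction with
  | base => exact le_rfl
  | succ m hm ih => exact (h m (hk.trans hm)).trans ih


theorem stmt2 (f φ : ℝ → ℝ) (a A B : ℕ → ℝ)
    (hf : MonotoneOn f (Set.Icc (0:ℝ) 1))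
    (hφpos : ∀ x : ℝ, 0 < x → 0 < φ x)
    (hφmono : MonotoneOn φ (Set.Ioi (0:ℝ)))
    (ha0 : a 0 = 0)
    (hak : ∀ k : ℕ, 1 ≤ k → a k = φ (k : ℝ))
    (hA : ∀ k : ℕ, 1 ≤ k → A k = 1 - a k / a (k + 1))
    (hB : ∀ k : ℕ, 1 ≤ k → B k = a (k + 1) / a k - 1) :
    (((ConvexOn ℝ (Set.Icc (0:ℝ) 1) f ∧
        ∀ k : ℕ, 1 ≤ k → (k : ℝ) * A k ≤ ((k : ℝ) + 1) * A (k + 1)) ∨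
      (ConcaveOn ℝ (Set.Icc (0:ℝ) 1) f ∧
        ∀ k : ℕ, 1 ≤ k → (k : ℝ) * B k ≤ ((k : ℝ) + 1) * B (k + 1))) →
      ∀ n : ℕ, 1 ≤ n →
        (1 / ((n : ℝ) + 1)) * ∑ k ∈ Finset.Icc 1 (n + 1), f (a k / a (n + 1)) ≤
        (1 / (n : ℝ)) * ∑ k ∈ Finset.Icc 1 n, f (a k / a n)) ∧
    (((ConvexOn ℝ (Set.Icc (0:ℝ) 1) f ∧
        ∀ k : ℕ, 1 ≤ k → ((k : ℝ) + 1) * B (k + 1) ≤ (k : ℝ) * B k) ∨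
      (ConcaveOn ℝ (Set.Icc (0:ℝ) 1) f ∧
        ∀ k : ℕ, 1 ≤ k → ((k : ℝ) + 1) * A (k + 1) ≤ (k : ℝ) * A k)) →
      ∀ n : ℕ, 1 ≤ n →
        (1 / (n : ℝ)) * ∑ k ∈ Finset.range n, f (a k / a n) ≤
        (1 / ((n : ℝ) + 1)) * ∑ k ∈ Finset.range (n + 1), f (a k / a (n + 1))) := by
  have hpos : ∀ k : ℕ, 1 ≤ k → 0 < a k := by
    intro k hk
    rw [hak k hk]
    exact hφpos _ (by exact_mod_cast hk)
  have hmono : ∀ k l : ℕ, 1 ≤ k → k ≤ l → a k ≤ a l := by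
    intro k l hk hkl
    rw [hak k hk, hak l (hk.trans hkl)]
    refine hφmono ?_ ?_ ?_
    · exact Set.mem_Ioi.2 (by exact_mod_cast hk)
    · exact Set.mem_Ioi.2 (by exact_mod_cast hk.trans hkl)
    · exact_mod_cast hkl
  constructor
  · rintro (⟨hconv, hcnd⟩ | ⟨hconc, hcnd⟩) n hn
    · -- convex, k*A k increasing
      refine case1_convex f a n hn hf hconv hpos hmono ?_
      intro k hk hkn
      have step : ∀ j : ℕ, 1 ≤ j →
          (fun m : ℕ => (m:ℝ) * (1 - a m / a (m+1))) j
            ≤ (fun m : ℕ => (m:ℝ) * (1 - a m / a (m+1))) (j+1) := by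
        intro j hj
        have h := hcnd j hj
        rw [hA j hj, hA (j+1) (by omega)] at h
        show (j:ℝ) * (1 - a j / a (j+1)) ≤ ((j+1:ℕ):ℝ) * (1 - a (j+1) / a (j+1+1))
        push_cast
        exact h
      exact chain_mono' _ step k n hk hkn
    · -- concave, k*B k increasing
      refine case1_concave f a n hn hf hconc hpos hmono ?_
      intro k hk hkn
      have step : ∀ j : ℕ, 1 ≤ j →
          (fun m : ℕ => (m:ℝ) * (a (m+1) / a m - 1)) j
            ≤ (fun m : ℕ => (m:ℝ) * (a (m+1) / a m - 1)) (j+1) := by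
        intro j hj
        have h := hcnd j hj
        rw [hB j hj, hB (j+1) (by omega)] at h
        show (j:ℝ) * (a (j+1) / a j - 1) ≤ ((j+1:ℕ):ℝ) * (a (j+1+1) / a (j+1) - 1)
        push_cast
        exact h
      exact chain_mono' _ step k n hk hkn
  · rintro (⟨hconv, hcnd⟩ | ⟨hconc, hcnd⟩) n hn
    · -- convex, k*B k decreasing
      refine case2_convex f a n hn hf hconv ha0 hpos hmono ?_
      intro k hk hkn
      have step : ∀ j : ℕ, 1 ≤ j →
          (fun m : ℕ => (m:ℝ) * (a (m+1) / a m - 1)) (j+1)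
            ≤ (fun m : ℕ => (m:ℝ) * (a (m+1) / a m - 1)) j := by
        intro j hj
        have h := hcnd j hj
        rw [hB j hj, hB (j+1) (by omega)] at h
        show ((j+1:ℕ):ℝ) * (a (j+1+1) / a (j+1) - 1) ≤ (j:ℝ) * (a (j+1) / a j - 1)
        push_cast
        exact h
      exact chain_anti' (fun m : ℕ => (m:ℝ) * (a (m+1) / a m - 1)) step k n hk hkn
    · -- concave, k*A k decreasing
      refine case2_concave f a n hn hf hconc ha0 hpos hmono ?_
      intro k hk hkn
      have step : ∀ j : ℕ, 1 ≤ j →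
          (fun m : ℕ => (m:ℝ) * (1 - a m / a (m+1))) (j+1)
            ≤ (fun m : ℕ => (m:ℝ) * (1 - a m / a (m+1))) j := by
        intro j hj
        have h := hcnd j hj
        rw [hA j hj, hA (j+1) (by omega)] at h
        show ((j+1:ℕ):ℝ) * (1 - a (j+1) / a (j+1+1)) ≤ (j:ℝ) * (1 - a j / a (j+1))
        push_cast
        exact h
      exact chain_anti' (fun m : ℕ => (m:ℝ) * (1 - a m / a (m+1))) step k n hk hkn
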